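/- Let F be a field of characteristic ≠ 2 and U = [u_{ij}] an n×n strictly lower triangular matrix over F. Suppose there is a degree-preserving F-algebra isomorphism A(0_n) → A(U) (i.e., one induced by an invertible linear map on the span of the generators). Then for every pair of indices 1 < j < k ≤ n with u_{kj} ≠ 0 and every 1 ≤ i < j, one has 2u_{ki} + u_{kj} u_{ji} = 0. -/

import Mathlib

open scoped BigOperators

noncomputable section

variable {F : Type} [Field F]

/-- `T` is strictly lower triangular. -/
def SLT {n : ℕ} (T : Matrix (Fin n) (Fin n) F) : Prop :=
  ∀ i j : Fin n, i ≤ j → T i j = 0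

/-- The ideal of relations defining the nil graded algebra `A(T)`:
`X i ^ 2 = ∑ j < i, T i j * X j * X i` (for `i = 0` the sum is empty, giving `X 0 ^ 2 = 0`). -/
def ntIdeal {n : ℕ} (T : Matrix (Fin n) (Fin n) F) : Ideal (MvPolynomial (Fin n) F) :=
  Ideal.span {p | ∃ i : Fin n,
    p = MvPolynomial.X i ^ 2 -
      ∑ j ∈ Finset.univ.filter (fun j => j < i),
        MvPolynomial.C (T i j) * MvPolynomial.X j * MvPolynomial.X i}

/-- The nil graded algebra `A(T)` associated to the strictly lower triangular matrix `T`. -/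
abbrev NTAlg {n : ℕ} (T : Matrix (Fin n) (Fin n) F) : Type :=
  MvPolynomial (Fin n) F ⧸ ntIdeal T

/-- The generator `X i` of `A(T)`. -/
def ntGen {n : ℕ} (T : Matrix (Fin n) (Fin n) F) (i : Fin n) : NTAlg T :=
  Ideal.Quotient.mk (ntIdeal T) (MvPolynomial.X i)

/-- There is a degree-preserving isomorphism `A(T) → A(S)`, i.e. an algebra isomorphism
sending each generator to an `F`-linear combination of the generators of the target. -/
def NTIso {n : ℕ} (T S : Matrix (Fin n) (Fin n) F) : Prop :=
  ∃ e : NTAlg T ≃ₐ[F] NTAlg S, ∃ Γ : Matrix (Fin n) (Fin n) F,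
    ∀ j : Fin n, e (ntGen T j) = ∑ i : Fin n, Γ i j • ntGen S i

namespace NTAux

open MvPolynomial

variable {n : ℕ}

lemma degree_eq (d : Fin n →₀ ℕ) : d.degree = ∑ i, d i := by
  rw [Finsupp.degree]
  exact Finset.sum_subset (Finset.subset_univ _)
    (fun x _ hx => by simpa using Finsupp.notMem_support_iff.mp hx)

lemma degree_add (a b : Fin n →₀ ℕ) : (a + b).degree = a.degree + b.degree := by
  simp [degree_eq, Finset.sum_add_distrib]

lemma degree_single (a : Fin n) (k : ℕ) : (Finsupp.single a k).degree = k := by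
  classical
  simp [degree_eq, Finsupp.single_apply]

lemma eq_single_of_degree_one {d : Fin n →₀ ℕ} (h : d.degree = 1) :
    ∃ a : Fin n, d = Finsupp.single a 1 := by
  classical
  have hd0 : d ≠ 0 := by
    intro h0
    rw [h0] at h
    simp at h
  obtain ⟨a, ha⟩ := Finsupp.support_nonempty_iff.mpr hd0
  have ha1 : 1 ≤ d a := Nat.one_le_iff_ne_zero.mpr (Finsupp.mem_support_iff.mp ha)
  have hsa : d a ≤ 1 := h ▸ Finsupp.le_degree a d
  have h1 : d a = 1 := le_antisymm hsa ha1
  have hdec : Finsupp.single a (d a) + d.erase a = d := Finsupp.single_add_erase a d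
  have hdeg : (Finsupp.single a (d a)).degree + (d.erase a).degree = 1 := by
    rw [← degree_add, hdec, h]
  rw [degree_single, h1] at hdeg
  have h0 : (d.erase a).degree = 0 := by omega
  have herz : d.erase a = 0 := (Finsupp.degree_eq_zero_iff _).mp h0
  refine ⟨a, ?_⟩
  rw [← hdec, herz, add_zero, h1]

lemma low_cases {d : Fin n →₀ ℕ} (hd : d.degree ≤ 1) :
    d = 0 ∨ ∃ a : Fin n, d = Finsupp.single a 1 := by
  rcases Nat.le_one_iff_eq_zero_or_eq_one.mp hd with h0 | h1
  · exact Or.inl ((Finsupp.degree_eq_zero_iff _).mp h0)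
  · exact Or.inr (eq_single_of_degree_one h1)

lemma coeff_mul_low {p q : MvPolynomial (Fin n) F} (hp : coeff 0 p = 0) (hq : coeff 0 q = 0)
    {d : Fin n →₀ ℕ} (hd : d.degree ≤ 1) : coeff d (p * q) = 0 := by
  rw [coeff_mul]
  apply Finset.sum_eq_zero
  rintro ⟨a, b⟩ hab
  have hab' : a + b = d := Finset.HasAntidiagonal.mem_antidiagonal.mp hab
  have hdeg : a.degree + b.degree ≤ 1 := by rw [← degree_add, hab']; exact hd
  have : a.degree = 0 ∨ b.degree = 0 := by omega
  rcases this with h | h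
  · rw [(Finsupp.degree_eq_zero_iff _).mp h] at *
    simp [hp]
  · rw [(Finsupp.degree_eq_zero_iff _).mp h] at *
    simp [hq]

lemma coeff_mul_low' {g : MvPolynomial (Fin n) F}
    (hg : ∀ d : Fin n →₀ ℕ, d.degree ≤ 1 → coeff d g = 0) (q : MvPolynomial (Fin n) F)
    {d : Fin n →₀ ℕ} (hd : d.degree ≤ 1) : coeff d (q * g) = 0 := by
  rw [coeff_mul]
  apply Finset.sum_eq_zero
  rintro ⟨a, b⟩ hab
  have hab' : a + b = d := Finset.HasAntidiagonal.mem_antidiagonal.mp hab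
  have hdeg : a.degree + b.degree ≤ 1 := by rw [← degree_add, hab']; exact hd
  rw [hg b (by omega), mul_zero]

lemma coeff_mul_high {g : MvPolynomial (Fin n) F}
    (hg : ∀ d : Fin n →₀ ℕ, d.degree ≤ 1 → coeff d g = 0) (q : MvPolynomial (Fin n) F)
    {d : Fin n →₀ ℕ} (hd : d.degree = 2) :
    coeff d (q * g) = coeff 0 q * coeff d g := by
  rw [coeff_mul]
  rw [Finset.sum_eq_single (0, d)]
  · rintro ⟨a, b⟩ hab hne
    have hab' : a + b = d := Finset.HasAntidiagonal.mem_antidiagonal.mp hab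
    by_cases hb : b.degree ≤ 1
    · rw [hg b hb, mul_zero]
    · exfalso
      have hdeg : a.degree + b.degree ≤ 2 := by rw [← degree_add, hab']; omega
      have ha0 : a.degree = 0 := by omega
      have ha : a = 0 := (Finsupp.degree_eq_zero_iff _).mp ha0
      apply hne
      rw [ha] at hab' ⊢
      rw [zero_add] at hab'
      rw [hab']
  · intro h
    exact absurd (Finset.HasAntidiagonal.mem_antidiagonal.mpr (zero_add d)) h

def gen (T : Matrix (Fin n) (Fin n) F) (m : Fin n) : MvPolynomial (Fin n) F :=
  MvPolynomial.X m ^ 2 -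
    ∑ j ∈ Finset.univ.filter (fun j => j < m),
      MvPolynomial.C (T m j) * MvPolynomial.X j * MvPolynomial.X m

lemma C_mul_X_mul_X (a : F) (j m : Fin n) :
    MvPolynomial.C a * MvPolynomial.X j * MvPolynomial.X m
      = monomial (Finsupp.single j 1 + Finsupp.single m 1) a := by
  rw [C_mul_X_eq_monomial, X, monomial_mul, mul_one]

lemma coeff_gen (T : Matrix (Fin n) (Fin n) F) (m : Fin n) (d : Fin n →₀ ℕ) :
    coeff d (gen T m) = (if Finsupp.single m 2 = d then (1:F) else 0)
      - ∑ j ∈ Finset.univ.filter (fun j => j < m),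
          (if Finsupp.single j 1 + Finsupp.single m 1 = d then T m j else 0) := by
  classical
  rw [gen, coeff_sub, X_pow_eq_monomial, coeff_monomial, coeff_sum]
  congr 1
  apply Finset.sum_congr rfl
  intro j _
  rw [C_mul_X_mul_X, coeff_monomial]

lemma pair_ne_single2 {j m l : Fin n} (hjm : j ≠ m) :
    Finsupp.single j 1 + Finsupp.single m 1 ≠ Finsupp.single l 2 := by
  intro h
  have hj := DFunLike.congr_fun h j
  have h1 : m ≠ j := fun h' => hjm h'.symm
  rw [Finsupp.add_apply, Finsupp.single_eq_same, Finsupp.single_eq_of_ne' h1] at hj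
  by_cases h2 : l = j
  · subst h2; rw [Finsupp.single_eq_same] at hj; omega
  · rw [Finsupp.single_eq_of_ne' h2] at hj; omega

lemma pair_eq_pair {j m i l : Fin n} :
    Finsupp.single j (1:ℕ) + Finsupp.single m 1 = Finsupp.single i 1 + Finsupp.single l 1 ↔
      (j = i ∧ m = l) ∨ (j = l ∧ m = i) := by
  rw [Finsupp.single_add_single_eq_single_add_single one_ne_zero one_ne_zero]
  constructor
  · rintro (h | h | h)
    · exact Or.inl h
    · exact Or.inr h.2
    · exact absurd h.1 (by omega)
  · rintro (h | h)
    · exact Or.inl h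
    · exact Or.inr (Or.inl ⟨rfl, h⟩)

lemma single2_eq_single2 {m l : Fin n} :
    (Finsupp.single m (2:ℕ) = Finsupp.single l 2) ↔ m = l := by
  rw [Finsupp.single_eq_single_iff]
  simp

lemma single2_ne_pair {m i l : Fin n} (hil : i ≠ l) :
    Finsupp.single m (2:ℕ) ≠ Finsupp.single i 1 + Finsupp.single l 1 := by
  intro h
  exact pair_ne_single2 hil h.symm

lemma mem_ideal_coeff (U : Matrix (Fin n) (Fin n) F) {p : MvPolynomial (Fin n) F}
    (hp : p ∈ ntIdeal U) :
    (∀ d : Fin n →₀ ℕ, d.degree ≤ 1 → coeff d p = 0) ∧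
    (∀ i l : Fin n, i < l →
      coeff (Finsupp.single i 1 + Finsupp.single l 1) p
        + U l i * coeff (Finsupp.single l 2) p = 0) := by
  classical
  refine Submodule.span_induction ?_ ?_ ?_ ?_ hp
  · rintro x ⟨m, rfl⟩
    constructor
    · intro d hd
      rw [show (MvPolynomial.X m ^ 2 - ∑ j ∈ Finset.univ.filter (fun j => j < m),
          MvPolynomial.C (U m j) * MvPolynomial.X j * MvPolynomial.X m) = gen U m from rfl]
      rw [coeff_gen, if_neg, Finset.sum_eq_zero, sub_zero]
      · intro j hj
        rw [if_neg]
        intro hc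
        rw [← hc, degree_add, degree_single, degree_single] at hd
        omega
      · intro hc
        rw [← hc, degree_single] at hd
        omega
    · intro i l hil
      rw [show (MvPolynomial.X m ^ 2 - ∑ j ∈ Finset.univ.filter (fun j => j < m),
          MvPolynomial.C (U m j) * MvPolynomial.X j * MvPolynomial.X m) = gen U m from rfl]
      rw [coeff_gen, coeff_gen]
      by_cases hml : m = l
      · subst hml
        rw [if_neg (single2_ne_pair hil.ne), if_pos rfl]
        rw [Finset.sum_eq_zero (fun j hj => if_neg
          (pair_ne_single2 (Finset.mem_filter.mp hj).2.ne))]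
        have hcong : ∀ j ∈ Finset.univ.filter (fun j => j < m),
            (if Finsupp.single j 1 + Finsupp.single m 1
                = Finsupp.single i 1 + Finsupp.single m 1 then U m j else 0)
              = if j = i then U m j else 0 := by
          intro j hj
          refine if_congr ?_ rfl rfl
          rw [pair_eq_pair]
          constructor
          · rintro (⟨h, -⟩ | ⟨h, -⟩)
            · exact h
            · exact absurd h (Finset.mem_filter.mp hj).2.ne
          · intro h
            exact Or.inl ⟨h, rfl⟩
        rw [Finset.sum_congr rfl hcong, Finset.sum_ite_eq' _ i (fun j => U m j),
          if_pos (by simp [hil])]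
        ring
      · rw [if_neg (single2_ne_pair hil.ne),
          if_neg (fun h => hml (single2_eq_single2.mp h))]
        rw [Finset.sum_eq_zero, Finset.sum_eq_zero]
        · ring
        · intro j hj
          exact if_neg (pair_ne_single2 (Finset.mem_filter.mp hj).2.ne)
        · intro j hj
          rw [if_neg]
          rw [pair_eq_pair]
          rintro (⟨-, h⟩ | ⟨h1, h2⟩)
          · exact hml h
          · have := (Finset.mem_filter.mp hj).2
            omega
  · constructor
    · intro d _; simp
    · intro i l _; simp
  · rintro x y hx hy ⟨hx1, hx2⟩ ⟨hy1, hy2⟩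
    constructor
    · intro d hd
      rw [coeff_add, hx1 d hd, hy1 d hd, add_zero]
    · intro i l hil
      rw [coeff_add, coeff_add]
      linear_combination hx2 i l hil + hy2 i l hil
  · rintro r x hx ⟨hx1, hx2⟩
    rw [smul_eq_mul]
    constructor
    · intro d hd
      exact coeff_mul_low' hx1 r hd
    · intro i l hil
      rw [coeff_mul_high hx1 r (by rw [degree_add, degree_single, degree_single]),
        coeff_mul_high hx1 r (by rw [degree_single])]
      linear_combination coeff 0 r * hx2 i l hil


lemma sq_as_sum (a : Fin n → F) :
    (∑ t, MvPolynomial.C (a t) * MvPolynomial.X t : MvPolynomial (Fin n) F) ^ 2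
      = ∑ t : Fin n, ∑ s : Fin n,
          monomial (Finsupp.single t 1 + Finsupp.single s 1) (a t * a s) := by
  rw [sq, Finset.sum_mul_sum]
  refine Finset.sum_congr rfl fun t _ => Finset.sum_congr rfl fun s _ => ?_
  rw [C_mul_X_eq_monomial, C_mul_X_eq_monomial, monomial_mul]

lemma sum_if_pair (a : Fin n → F) (i' l' : Fin n) :
    (∑ t : Fin n, ∑ s : Fin n, (if t = i' ∧ s = l' then a t * a s else 0)) = a i' * a l' := by
  classical
  have h : ∀ t s : Fin n, (if t = i' ∧ s = l' then a t * a s else 0)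
      = if s = l' then (if t = i' then a t * a s else 0) else 0 := by
    intro t s
    by_cases h1 : t = i' <;> by_cases h2 : s = l' <;> simp [h1, h2]
  simp only [h, Finset.sum_ite_eq']
  simp

lemma coeff_sq_pair (a : Fin n → F) {i l : Fin n} (hil : i < l) :
    coeff (Finsupp.single i 1 + Finsupp.single l 1)
      ((∑ t, MvPolynomial.C (a t) * MvPolynomial.X t : MvPolynomial (Fin n) F) ^ 2)
      = 2 * (a i * a l) := by
  classical
  rw [sq_as_sum]
  simp only [coeff_sum, coeff_monomial]
  have key : ∀ t s : Fin n,
      (if Finsupp.single t 1 + Finsupp.single s 1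
          = Finsupp.single i 1 + Finsupp.single l 1 then a t * a s else 0)
        = (if t = i ∧ s = l then a t * a s else 0)
          + (if t = l ∧ s = i then a t * a s else 0) := by
    intro t s
    rw [if_congr pair_eq_pair rfl rfl]
    by_cases h1 : t = i ∧ s = l
    · rw [if_pos (Or.inl h1), if_pos h1, if_neg, add_zero]
      rintro ⟨htl, -⟩
      exact hil.ne (h1.1.symm.trans htl)
    · by_cases h2 : t = l ∧ s = i
      · rw [if_pos (Or.inr h2), if_neg h1, if_pos h2, zero_add]
      · rw [if_neg (by rintro (h | h); exacts [h1 h, h2 h]), if_neg h1, if_neg h2, add_zero]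
  simp only [key, Finset.sum_add_distrib]
  rw [sum_if_pair a i l, sum_if_pair a l i]
  ring

lemma coeff_sq_diag (a : Fin n → F) (l : Fin n) :
    coeff (Finsupp.single l 2)
      ((∑ t, MvPolynomial.C (a t) * MvPolynomial.X t : MvPolynomial (Fin n) F) ^ 2)
      = a l * a l := by
  classical
  rw [sq_as_sum]
  simp only [coeff_sum, coeff_monomial]
  have key : ∀ t s : Fin n,
      (if Finsupp.single t 1 + Finsupp.single s 1 = Finsupp.single l 2 then a t * a s else 0)
        = (if t = l ∧ s = l then a t * a s else 0) := by
    intro t s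
    refine if_congr ?_ rfl rfl
    constructor
    · intro h
      by_cases hts : t = s
      · subst hts
        have h2 := DFunLike.congr_fun h t
        rw [Finsupp.add_apply, Finsupp.single_eq_same] at h2
        by_cases hlt : l = t
        · exact ⟨hlt.symm, hlt.symm⟩
        · rw [Finsupp.single_eq_of_ne' hlt] at h2; omega
      · exact absurd h (pair_ne_single2 hts)
    · rintro ⟨rfl, rfl⟩
      rw [← Finsupp.single_add]
  simp only [key]
  rw [sum_if_pair a l l]

lemma X_sq_mem_zero (j : Fin n) :
    (MvPolynomial.X j ^ 2 : MvPolynomial (Fin n) F)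
      ∈ ntIdeal (0 : Matrix (Fin n) (Fin n) F) := by
  apply Ideal.subset_span
  exact ⟨j, by simp⟩

lemma mk_smul (T : Matrix (Fin n) (Fin n) F) (a : F) (p : MvPolynomial (Fin n) F) :
    Ideal.Quotient.mk (ntIdeal T) (MvPolynomial.C a * p)
      = a • Ideal.Quotient.mk (ntIdeal T) p := by
  rw [← smul_eq_C_mul]
  have h1 : Ideal.Quotient.mk (ntIdeal T) (a • p)
      = Ideal.Quotient.mkₐ F (ntIdeal T) (a • p) := by
    rw [Ideal.Quotient.mkₐ_eq_mk]
  rw [h1, map_smul, Ideal.Quotient.mkₐ_eq_mk]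

lemma smul_gen_sum (U : Matrix (Fin n) (Fin n) F) (a : Fin n → F) :
    (∑ i, a i • ntGen U i)
      = Ideal.Quotient.mk (ntIdeal U) (∑ i, MvPolynomial.C (a i) * MvPolynomial.X i) := by
  rw [map_sum]
  refine Finset.sum_congr rfl fun i _ => ?_
  rw [ntGen, ← mk_smul]

lemma col_rel {U : Matrix (Fin n) (Fin n) F}
    (e : NTAlg (0 : Matrix (Fin n) (Fin n) F) ≃ₐ[F] NTAlg U)
    (Γ : Matrix (Fin n) (Fin n) F)
    (hΓ : ∀ j : Fin n, e (ntGen 0 j) = ∑ i : Fin n, Γ i j • ntGen U i)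
    (j : Fin n) {i l : Fin n} (hil : i < l) :
    2 * (Γ i j * Γ l j) + U l i * (Γ l j * Γ l j) = 0 := by
  have hgen0 : (ntGen (0 : Matrix (Fin n) (Fin n) F) j) ^ 2 = 0 := by
    rw [ntGen, ← map_pow, Ideal.Quotient.eq_zero_iff_mem]
    exact X_sq_mem_zero j
  have h1 : (∑ i, Γ i j • ntGen U i) ^ 2 = 0 := by
    rw [← hΓ j, ← map_pow, hgen0, map_zero]
  rw [smul_gen_sum U (fun i => Γ i j), ← map_pow, Ideal.Quotient.eq_zero_iff_mem] at h1
  have h2 := (mem_ideal_coeff U h1).2 i l hil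
  rw [coeff_sq_pair _ hil, coeff_sq_diag] at h2
  exact h2

lemma aeval_zero_ideal (T : Matrix (Fin n) (Fin n) F) :
    ∀ p ∈ ntIdeal T, (MvPolynomial.aeval (0 : Fin n → F)) p = 0 := by
  intro p hp
  have h1 : coeff 0 p = 0 := (mem_ideal_coeff T hp).1 0 (by simp)
  rw [aeval_zero, constantCoeff_eq]
  simpa using h1

def eps (T : Matrix (Fin n) (Fin n) F) : NTAlg T →ₐ[F] F :=
  Ideal.Quotient.liftₐ (ntIdeal T) (MvPolynomial.aeval 0) (aeval_zero_ideal T)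

lemma eps_mk (T : Matrix (Fin n) (Fin n) F) (p : MvPolynomial (Fin n) F) :
    eps T (Ideal.Quotient.mk (ntIdeal T) p) = coeff 0 p := by
  show (MvPolynomial.aeval (0 : Fin n → F)) p = coeff 0 p
  simp [aeval_zero, constantCoeff_eq]

lemma eps_comp' {U : Matrix (Fin n) (Fin n) F}
    (e : NTAlg (0 : Matrix (Fin n) (Fin n) F) ≃ₐ[F] NTAlg U)
    (Γ : Matrix (Fin n) (Fin n) F)
    (hΓ : ∀ j : Fin n, e (ntGen 0 j) = ∑ i : Fin n, Γ i j • ntGen U i)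
    (p : MvPolynomial (Fin n) F) :
    eps U (e (Ideal.Quotient.mk (ntIdeal (0 : Matrix (Fin n) (Fin n) F)) p))
      = coeff 0 p := by
  induction p using MvPolynomial.induction_on with
  | C a =>
      have h1 : (Ideal.Quotient.mk (ntIdeal (0 : Matrix (Fin n) (Fin n) F)))
          (MvPolynomial.C a) = algebraMap F _ a := rfl
      rw [h1, AlgEquiv.commutes, (eps U).commutes]
      simp
  | add p q hp hq =>
      rw [map_add, map_add, map_add, hp, hq, coeff_add]
  | mul_X p i hp =>
      have hXi : eps U (e (Ideal.Quotient.mk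
          (ntIdeal (0 : Matrix (Fin n) (Fin n) F)) (MvPolynomial.X i))) = 0 := by
        rw [show (Ideal.Quotient.mk (ntIdeal (0 : Matrix (Fin n) (Fin n) F)))
          (MvPolynomial.X i) = ntGen 0 i from rfl, hΓ i, map_sum]
        refine Finset.sum_eq_zero fun i' _ => ?_
        rw [map_smul, smul_eq_mul]
        rw [show ntGen U i' = Ideal.Quotient.mk (ntIdeal U) (MvPolynomial.X i') from rfl,
          eps_mk, coeff_zero_X, mul_zero]
      rw [map_mul, map_mul, map_mul, hp, hXi, mul_zero]
      rw [← constantCoeff_eq, map_mul, constantCoeff_X, mul_zero]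

lemma eps_comp {U : Matrix (Fin n) (Fin n) F}
    (e : NTAlg (0 : Matrix (Fin n) (Fin n) F) ≃ₐ[F] NTAlg U)
    (Γ : Matrix (Fin n) (Fin n) F)
    (hΓ : ∀ j : Fin n, e (ntGen 0 j) = ∑ i : Fin n, Γ i j • ntGen U i)
    (x : NTAlg (0 : Matrix (Fin n) (Fin n) F)) : eps U (e x) = eps 0 x := by
  obtain ⟨p, rfl⟩ := Ideal.Quotient.mk_surjective x
  rw [eps_comp' e Γ hΓ p, eps_mk]

set_option maxHeartbeats 1000000 in
set_option synthInstance.maxHeartbeats 200000 in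
lemma good_high {U : Matrix (Fin n) (Fin n) F}
    (e : NTAlg (0 : Matrix (Fin n) (Fin n) F) ≃ₐ[F] NTAlg U)
    (Γ : Matrix (Fin n) (Fin n) F)
    (hΓ : ∀ j : Fin n, e (ntGen 0 j) = ∑ i : Fin n, Γ i j • ntGen U i)
    {r : MvPolynomial (Fin n) F}
    (hr : ∀ d : Fin n →₀ ℕ, d.degree ≤ 1 → coeff d r = 0) :
    ∃ s : MvPolynomial (Fin n) F,
      Ideal.Quotient.mk (ntIdeal U) s
          = e (Ideal.Quotient.mk (ntIdeal (0 : Matrix (Fin n) (Fin n) F)) r) ∧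
        ∀ d : Fin n →₀ ℕ, d.degree ≤ 1 → coeff d s = 0 := by
  classical
  set P : NTAlg (0 : Matrix (Fin n) (Fin n) F) → Prop := fun x =>
    ∃ s, Ideal.Quotient.mk (ntIdeal U) s = e x ∧
      ∀ d : Fin n →₀ ℕ, d.degree ≤ 1 → coeff d s = 0 with hP
  have Pmul : ∀ x y : NTAlg (0 : Matrix (Fin n) (Fin n) F),
      eps 0 x = 0 → eps 0 y = 0 → P (x * y) := by
    intro x y hx hy
    obtain ⟨p, hp⟩ := Ideal.Quotient.mk_surjective (e x)
    obtain ⟨q, hq⟩ := Ideal.Quotient.mk_surjective (e y)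
    refine ⟨p * q, by rw [map_mul, hp, hq, map_mul], fun d hd => ?_⟩
    have hp0 : coeff 0 p = 0 := by
      have := eps_mk U p
      rw [hp, eps_comp e Γ hΓ, hx] at this
      exact this.symm
    have hq0 : coeff 0 q = 0 := by
      have := eps_mk U q
      rw [hq, eps_comp e Γ hΓ, hy] at this
      exact this.symm
    exact coeff_mul_low hp0 hq0 hd
  have Pzero : P 0 := ⟨0, by simp, fun d _ => by simp⟩
  have Padd : ∀ x y : NTAlg (0 : Matrix (Fin n) (Fin n) F), P x → P y → P (x + y) := by
    rintro x y ⟨s1, h1, h1'⟩ ⟨s2, h2, h2'⟩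
    exact ⟨s1 + s2, by rw [map_add, h1, h2, map_add],
      fun d hd => by rw [coeff_add, h1' d hd, h2' d hd, add_zero]⟩
  show P (Ideal.Quotient.mk (ntIdeal (0 : Matrix (Fin n) (Fin n) F)) r)
  have hrsum : Ideal.Quotient.mk (ntIdeal (0 : Matrix (Fin n) (Fin n) F)) r
      = ∑ d ∈ r.support,
          Ideal.Quotient.mk (ntIdeal (0 : Matrix (Fin n) (Fin n) F))
            (monomial d (coeff d r)) := by
    conv_lhs => rw [r.as_sum]
    rw [map_sum]
  rw [hrsum]
  refine Finset.sum_induction _ P Padd Pzero ?_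
  intro d hd
  have hcd : coeff d r ≠ 0 := MvPolynomial.mem_support_iff.mp hd
  have hdeg : 2 ≤ d.degree := by
    by_contra hcon
    exact hcd (hr d (by omega))
  have hd0 : d ≠ 0 := by
    intro h
    rw [h] at hdeg
    simp at hdeg
  obtain ⟨a, ha⟩ := Finsupp.support_nonempty_iff.mpr hd0
  have ha1 : 1 ≤ d a := Nat.one_le_iff_ne_zero.mpr (Finsupp.mem_support_iff.mp ha)
  set d' : Fin n →₀ ℕ := d - Finsupp.single a 1 with hd'
  have hdd : Finsupp.single a 1 + d' = d := by
    ext b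
    rw [Finsupp.add_apply, hd', Finsupp.tsub_apply]
    rcases eq_or_ne a b with rfl | hab
    · rw [Finsupp.single_eq_same]
      omega
    · rw [Finsupp.single_eq_of_ne' hab]
      omega
  have hd'0 : d' ≠ 0 := by
    intro h
    rw [h, add_zero] at hdd
    rw [← hdd, degree_single] at hdeg
    omega
  have hmon : (monomial d (coeff d r) : MvPolynomial (Fin n) F)
      = MvPolynomial.X a * monomial d' (coeff d r) := by
    rw [X, monomial_mul, one_mul, hdd]
  rw [hmon, map_mul]
  apply Pmul
  · rw [show (Ideal.Quotient.mk (ntIdeal (0 : Matrix (Fin n) (Fin n) F)))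
      (MvPolynomial.X a) = Ideal.Quotient.mk _ (MvPolynomial.X a) from rfl, eps_mk]
    exact coeff_zero_X a
  · rw [eps_mk, coeff_monomial, if_neg hd'0]

set_option maxHeartbeats 1000000 in
set_option synthInstance.maxHeartbeats 200000 in
lemma exists_idx {U : Matrix (Fin n) (Fin n) F}
    (e : NTAlg (0 : Matrix (Fin n) (Fin n) F) ≃ₐ[F] NTAlg U)
    (Γ : Matrix (Fin n) (Fin n) F)
    (hΓ : ∀ j : Fin n, e (ntGen 0 j) = ∑ i : Fin n, Γ i j • ntGen U i)
    (k : Fin n) : ∃ j, Γ k j ≠ 0 := by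
  classical
  by_contra hc
  push_neg at hc
  obtain ⟨z, hz⟩ := e.surjective (ntGen U k)
  obtain ⟨q, rfl⟩ := Ideal.Quotient.mk_surjective z
  set c0 : F := coeff 0 q with hc0
  set cl : Fin n → F := fun j => coeff (Finsupp.single j 1) q with hcl
  set r : MvPolynomial (Fin n) F :=
    q - MvPolynomial.C c0 - ∑ j, MvPolynomial.C (cl j) * MvPolynomial.X j with hrdef
  have hr : ∀ d : Fin n →₀ ℕ, d.degree ≤ 1 → coeff d r = 0 := by
    intro d hd
    rcases low_cases hd with rfl | ⟨a, rfl⟩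
    · rw [hrdef]
      rw [coeff_sub, coeff_sub, coeff_sum]
      rw [coeff_C, if_pos rfl]
      rw [Finset.sum_eq_zero fun j _ => by rw [coeff_C_mul, coeff_zero_X, mul_zero]]
      show c0 - c0 - 0 = 0
      ring
    · rw [hrdef]
      rw [coeff_sub, coeff_sub, coeff_sum]
      have h1 : coeff (Finsupp.single a 1) (MvPolynomial.C c0) = 0 := by
        rw [coeff_C, if_neg fun h => one_ne_zero (Finsupp.single_eq_zero.mp h.symm)]
      have h2 : (∑ j, coeff (Finsupp.single a 1)
          (MvPolynomial.C (cl j) * MvPolynomial.X j)) = cl a := by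
        rw [Finset.sum_eq_single a]
        · rw [coeff_C_mul, coeff_X_same, mul_one]
        · intro j _ hja
          rw [coeff_C_mul, coeff_X', if_neg, mul_zero]
          rw [Finsupp.single_left_inj one_ne_zero]
          exact hja
        · intro h
          exact absurd (Finset.mem_univ a) h
      rw [h1, h2]
      show cl a - 0 - cl a = 0
      ring
  obtain ⟨s, hs, hslow⟩ := good_high e Γ hΓ hr
  have hq : q = MvPolynomial.C c0 + (∑ j, MvPolynomial.C (cl j) * MvPolynomial.X j) + r := by
    rw [hrdef]
    ring
  have hCe : e (Ideal.Quotient.mk (ntIdeal (0 : Matrix (Fin n) (Fin n) F)) (MvPolynomial.C c0))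
      = Ideal.Quotient.mk (ntIdeal U) (MvPolynomial.C c0) := by
    rw [show (Ideal.Quotient.mk (ntIdeal (0 : Matrix (Fin n) (Fin n) F))) (MvPolynomial.C c0)
      = algebraMap F _ c0 from rfl, AlgEquiv.commutes]
    rfl
  have hBe : ∀ j : Fin n, e (Ideal.Quotient.mk (ntIdeal (0 : Matrix (Fin n) (Fin n) F))
        (MvPolynomial.C (cl j) * MvPolynomial.X j))
      = Ideal.Quotient.mk (ntIdeal U)
          (∑ i, MvPolynomial.C (cl j * Γ i j) * MvPolynomial.X i) := by
    intro j
    rw [mk_smul, map_smul, show (Ideal.Quotient.mk (ntIdeal (0 : Matrix (Fin n) (Fin n) F)))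
      (MvPolynomial.X j) = ntGen 0 j from rfl, hΓ j]
    rw [← smul_gen_sum U (fun i => cl j * Γ i j)]
    rw [Finset.smul_sum]
    refine Finset.sum_congr rfl fun i _ => ?_
    rw [smul_smul]
  have hEq : Ideal.Quotient.mk (ntIdeal U) (MvPolynomial.X k)
      = Ideal.Quotient.mk (ntIdeal U) (MvPolynomial.C c0
          + (∑ j, ∑ i, MvPolynomial.C (cl j * Γ i j) * MvPolynomial.X i) + s) := by
    have hL : e (Ideal.Quotient.mk (ntIdeal (0 : Matrix (Fin n) (Fin n) F)) q)
        = Ideal.Quotient.mk (ntIdeal U) (MvPolynomial.C c0)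
          + (∑ j, Ideal.Quotient.mk (ntIdeal U)
              (∑ i, MvPolynomial.C (cl j * Γ i j) * MvPolynomial.X i))
          + Ideal.Quotient.mk (ntIdeal U) s := by
      conv_lhs => rw [hq]
      rw [map_add, map_add, map_add, map_add, hCe, ← hs, map_sum, map_sum]
      rw [Finset.sum_congr rfl fun j _ => hBe j]
    rw [show Ideal.Quotient.mk (ntIdeal U) (MvPolynomial.X k) = ntGen U k from rfl, ← hz, hL]
    rw [map_add, map_add, map_sum]
  have hEq2 : MvPolynomial.X k - (MvPolynomial.C c0
      + (∑ j, ∑ i, MvPolynomial.C (cl j * Γ i j) * MvPolynomial.X i) + s) ∈ ntIdeal U :=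
    (Ideal.Quotient.eq).mp hEq
  have hco := (mem_ideal_coeff U hEq2).1 (Finsupp.single k 1) (le_of_eq (degree_single k 1))
  rw [coeff_sub, coeff_add, coeff_add, coeff_X_same] at hco
  have hA : coeff (Finsupp.single k 1) (MvPolynomial.C c0) = 0 := by
    rw [coeff_C, if_neg fun h => one_ne_zero (Finsupp.single_eq_zero.mp h.symm)]
  have hB : coeff (Finsupp.single k 1)
      (∑ j, ∑ i, MvPolynomial.C (cl j * Γ i j) * MvPolynomial.X i) = 0 := by
    rw [coeff_sum]
    refine Finset.sum_eq_zero fun j _ => ?_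
    rw [coeff_sum]
    refine Finset.sum_eq_zero fun i _ => ?_
    rw [coeff_C_mul, coeff_X']
    by_cases hik : i = k
    · subst hik
      rw [hc j, mul_zero, zero_mul]
    · rw [if_neg, mul_zero]
      rw [Finsupp.single_left_inj one_ne_zero]
      exact hik
  have hsk : coeff (Finsupp.single k 1) s = 0 := hslow _ (le_of_eq (degree_single k 1))
  rw [hA, hB, hsk] at hco
  norm_num at hco

end NTAux

/-- If there is a degree-preserving isomorphism `A(0ₙ) → A(U)`, then for all `i < j < k`
with `u_{kj} ≠ 0`, one has `2u_{ki} + u_{kj} u_{ji} = 0`. -/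
theorem stmt12 {n : ℕ} (h2 : (2 : F) ≠ 0) (U : Matrix (Fin n) (Fin n) F) (hU : SLT U)
    (hiso : NTIso (0 : Matrix (Fin n) (Fin n) F) U) :
    ∀ i j k : Fin n, i < j → j < k → U k j ≠ 0 →
      2 * U k i + U k j * U j i = 0 := by
  intro i j k hij hjk hkj
  obtain ⟨e, Γ, hΓ⟩ := hiso
  obtain ⟨j0, hj0⟩ := NTAux.exists_idx e Γ hΓ k
  have E1 := NTAux.col_rel e Γ hΓ j0 hjk
  have E2 := NTAux.col_rel e Γ hΓ j0 (hij.trans hjk)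
  have E3 := NTAux.col_rel e Γ hΓ j0 hij
  have haj : Γ j j0 ≠ 0 := by
    intro h
    rw [h] at E1
    have h4 : U k j * (Γ k j0 * Γ k j0) = 0 := by linear_combination E1
    rcases mul_eq_zero.mp h4 with h5 | h5
    · exact hkj h5
    · rcases mul_eq_zero.mp h5 with h6 | h6 <;> exact hj0 h6
  have key : (2 * U k i + U k j * U j i) * (Γ j j0 * (Γ k j0 * Γ k j0)) = 0 := by
    linear_combination (2 * Γ j j0) * E2 + (U j i * Γ j j0) * E1 - (2 * Γ k j0) * E3
  rcases mul_eq_zero.mp key with h | h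
  · exact h
  · exfalso
    rcases mul_eq_zero.mp h with h5 | h5
    · exact haj h5
    · rcases mul_eq_zero.mp h5 with h6 | h6 <;> exact hj0 h6
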